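/- Let (X, T) and (Y, S) be topological dynamical systems and f ∈ C(X × Y). If (X, T) has the specification property, then the limit lim_{k→∞} max_{y ∈ Y} min_{x ∈ X} (1/k) Σ_{j=0}^{k−1} f(T^j x, S^j y) exists. -/

import Mathlib

open MeasureTheory Filter Topology
open scoped ENNReal NNReal

noncomputable section

/-- Birkhoff average `A_k f(x, y) = (1/k) Σ_{j<k} f(T^j x, S^j y)`. -/
def birk2 {X Y : Type*} (T : X → X) (S : Y → Y) (f : X × Y → ℝ) (k : ℕ) (x : X) (y : Y) : ℝ :=
  (k : ℝ)⁻¹ * ∑ j ∈ Finset.range k, f ((Prod.map T S)^[j] (x, y))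

/-- The set of invariant Borel probability measures of a map. -/
def invMeas {Z : Type*} [MeasurableSpace Z] (U : Z → Z) : Set (ProbabilityMeasure Z) :=
  {μ | μ.toMeasure.map U = μ.toMeasure}

/-- `ψ_f(ν) = min { ∫ f dλ : λ ∈ M_{T×S}(X × Y), (π_Y)_* λ = ν }`. -/
def psi2 {X Y : Type*} [MeasurableSpace X] [MeasurableSpace Y]
    (T : X → X) (S : Y → Y) (f : X × Y → ℝ) (ν : ProbabilityMeasure Y) : ℝ :=
  sInf {r | ∃ lam ∈ invMeas (Prod.map T S), lam.toMeasure.map Prod.snd = ν.toMeasure ∧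
    r = ∫ p, f p ∂lam.toMeasure}

/-- `α(f) = sup_{ν ∈ M_S(Y)} ψ_f(ν)`. -/
def alpha2 {X Y : Type*} [MeasurableSpace X] [MeasurableSpace Y]
    (T : X → X) (S : Y → Y) (f : X × Y → ℝ) : ℝ :=
  sSup {r | ∃ ν ∈ invMeas S, r = psi2 T S f ν}

/-- `R_f`: points `(x, y)` whose Birkhoff averages converge. -/
def reg2 {X Y : Type*} (T : X → X) (S : Y → Y) (f : X × Y → ℝ) : Set (X × Y) :=
  {p | ∃ L : ℝ, Tendsto (fun k : ℕ => birk2 T S f k p.1 p.2) atTop (𝓝 L)}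

/-- `β(f) = sup_{y ∈ π_Y(R_f)} inf_{(x,y) ∈ R_f} lim_k A_k f(x, y)`. -/
def beta2 {X Y : Type*} (T : X → X) (S : Y → Y) (f : X × Y → ℝ) : ℝ :=
  sSup {r | ∃ y : Y, (∃ x : X, (x, y) ∈ reg2 T S f) ∧
    r = sInf {L | ∃ x : X, (x, y) ∈ reg2 T S f ∧
      Tendsto (fun k : ℕ => birk2 T S f k x y) atTop (𝓝 L)}}

/-- `γ(f) = sup_{y ∈ Y} inf_{x ∈ X} limsup_k A_k f(x, y)`. -/
def gamma2 {X Y : Type*} (T : X → X) (S : Y → Y) (f : X × Y → ℝ) : ℝ :=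
  ⨆ y : Y, ⨅ x : X, limsup (fun k : ℕ => birk2 T S f k x y) atTop

/-- `δ(f) = limsup_k max_{y ∈ Y} min_{x ∈ X} A_k f(x, y)`. -/
def delta2 {X Y : Type*} (T : X → X) (S : Y → Y) (f : X × Y → ℝ) : ℝ :=
  limsup (fun k : ℕ => ⨆ y : Y, ⨅ x : X, birk2 T S f k x y) atTop

/-- The invariant probability measures supported on a single closed (periodic) orbit. -/
def Mco {Z : Type*} [MeasurableSpace Z] (U : Z → Z) : Set (ProbabilityMeasure Z) :=
  {μ | ∃ (k : ℕ) (z : Z), 0 < k ∧ U^[k] z = z ∧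
    μ.toMeasure = (k : ℝ≥0∞)⁻¹ • ∑ j ∈ Finset.range k, Measure.dirac (U^[j] z)}

/-- `α_per(f)`: as `α(f)`, but with both measures ranging over closed-orbit measures. -/
def alphaPer2 {X Y : Type*} [MeasurableSpace X] [MeasurableSpace Y]
    (T : X → X) (S : Y → Y) (f : X × Y → ℝ) : ℝ :=
  sSup {r | ∃ ν ∈ Mco S,
    r = sInf {t | ∃ lam ∈ Mco (Prod.map T S), lam.toMeasure.map Prod.snd = ν.toMeasure ∧
      t = ∫ p, f p ∂lam.toMeasure}}

/-- The set of periodic points. -/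
def perPts {Z : Type*} (U : Z → Z) : Set Z :=
  {z | ∃ t : ℕ, 0 < t ∧ U^[t] z = z}

/-- `δ_per(f) = limsup_k sup_{y ∈ Per_S(Y)} inf_{x ∈ Per_T(X)} A_k f(x, y)`. -/
def deltaPer2 {X Y : Type*} (T : X → X) (S : Y → Y) (f : X × Y → ℝ) : ℝ :=
  limsup (fun k : ℕ => sSup {r | ∃ y ∈ perPts S,
    r = sInf {t | ∃ x ∈ perPts T, t = birk2 T S f k x y}}) atTop

/-- The `j`-th power (`j : ℤ`) of a homeomorphism, applied to a point. -/
def zit {X : Type*} [TopologicalSpace X] (T : X ≃ₜ X) (j : ℤ) (x : X) : X :=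
  (T.toEquiv ^ j) x

/-- The specification property for `(X, T)` (with respect to the metric of `X`):
for every `η > 0` there is `D = D(η)` such that every `D`-spaced specification
`ξ = (x_i, [a_i, b_i])_{i=1}^n` admits an `η`-tracing point. -/
def SpecProp {X : Type*} [MetricSpace X] (T : X ≃ₜ X) : Prop :=
  ∀ η : ℝ, 0 < η → ∃ D : ℕ, 0 < D ∧
    ∀ (n : ℕ) (x : Fin (n + 1) → X) (a b : Fin (n + 1) → ℤ),
      (∀ i, a i ≤ b i) →
      (∀ i : Fin n, (D : ℤ) ≤ a i.succ - b i.castSucc) →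
      ∃ x' : X, ∀ i : Fin (n + 1), ∀ j : ℤ, a i ≤ j → j ≤ b i →
        dist (zit T j x') (zit T j (x i)) < η

/-- The periodic specification property for `(X, T)`: as `SpecProp`, but the tracing
point can moreover be chosen of period `b_n - a_1 + D`. -/
def PerSpecProp {X : Type*} [MetricSpace X] (T : X ≃ₜ X) : Prop :=
  ∀ η : ℝ, 0 < η → ∃ D : ℕ, 0 < D ∧
    ∀ (n : ℕ) (x : Fin (n + 1) → X) (a b : Fin (n + 1) → ℤ),
      (∀ i, a i ≤ b i) →
      (∀ i : Fin n, (D : ℤ) ≤ a i.succ - b i.castSucc) →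
      ∃ x' : X, (∀ i : Fin (n + 1), ∀ j : ℤ, a i ≤ j → j ≤ b i →
          dist (zit T j x') (zit T j (x i)) < η) ∧
        zit T (b (Fin.last n) - a 0 + (D : ℤ)) x' = x'

set_option linter.unusedSectionVars false
set_option linter.unusedVariables false
set_option maxHeartbeats 1000000

lemma zit_natCast {X : Type*} [TopologicalSpace X] (T : X ≃ₜ X) (m : ℕ) (x : X) :
    zit T (m : ℤ) x = (⇑T)^[m] x := by
  rw [zit, zpow_natCast, ← Equiv.Perm.iterate_eq_pow]; rfl

lemma zit_zadd {X : Type*} [TopologicalSpace X] (T : X ≃ₜ X) (j c : ℤ) (x : X) :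
    zit T j (zit T c x) = zit T (j + c) x := by
  simp [zit, zpow_add, Equiv.Perm.mul_apply]

lemma sum_range_mul_eq (g : ℕ → ℝ) (m q : ℕ) :
    ∑ j ∈ Finset.range (q*m), g j
      = ∑ i ∈ Finset.range q, ∑ l ∈ Finset.range m, g (i*m + l) := by
  induction q with
  | zero => simp
  | succ q ih => rw [Nat.succ_mul, Finset.sum_range_add, ih, Finset.sum_range_succ]

section aux
variable {X Y : Type*} [MetricSpace X] [Nonempty X]
  [MetricSpace Y] [Nonempty Y]

noncomputable def Phi (T : X ≃ₜ X) (S : Y ≃ₜ Y) (f : X × Y → ℝ) (k : ℕ) (y : Y) : ℝ :=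
  ⨅ x : X, ∑ j ∈ Finset.range k, f ((⇑T)^[j] x, (⇑S)^[j] y)

variable (T : X ≃ₜ X) (S : Y ≃ₜ Y) (f : X × Y → ℝ) {C : ℝ} (hC : ∀ p, |f p| ≤ C)
include hC

lemma sum_abs_le (k : ℕ) (x : X) (y : Y) :
    |∑ j ∈ Finset.range k, f ((⇑T)^[j] x, (⇑S)^[j] y)| ≤ (k:ℝ) * C := by
  calc |∑ j ∈ Finset.range k, f ((⇑T)^[j] x, (⇑S)^[j] y)|
      ≤ ∑ j ∈ Finset.range k, |f ((⇑T)^[j] x, (⇑S)^[j] y)| := Finset.abs_sum_le_sum_abs _ _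
    _ ≤ ∑ j ∈ Finset.range k, C := Finset.sum_le_sum fun j _ => hC _
    _ = (k:ℝ) * C := by simp [mul_comm]

lemma bddBelow_sum (k : ℕ) (y : Y) :
    BddBelow (Set.range fun x : X => ∑ j ∈ Finset.range k, f ((⇑T)^[j] x, (⇑S)^[j] y)) := by
  refine ⟨-((k:ℝ)*C), ?_⟩
  rintro r ⟨x, rfl⟩
  exact neg_le_of_abs_le (sum_abs_le T S f hC k x y)

lemma Phi_le_sum (k : ℕ) (y : Y) (x : X) :
    Phi T S f k y ≤ ∑ j ∈ Finset.range k, f ((⇑T)^[j] x, (⇑S)^[j] y) :=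
  ciInf_le (bddBelow_sum T S f hC k y) x

lemma abs_Phi_le (k : ℕ) (y : Y) : |Phi T S f k y| ≤ (k:ℝ) * C := by
  rw [abs_le]
  refine ⟨le_ciInf fun x => neg_le_of_abs_le (sum_abs_le T S f hC k x y),
    (Phi_le_sum T S f hC k y (Classical.arbitrary X)).trans
      (le_of_abs_le (sum_abs_le T S f hC k _ y))⟩

lemma key {ε η : ℝ} (hε : 0 ≤ ε)
    (hUC : ∀ p q : X × Y, dist p q < η → |f p - f q| ≤ ε)
    {D : ℕ}
    (hspec : ∀ (n : ℕ) (x : Fin (n+1) → X) (a b : Fin (n+1) → ℤ),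
      (∀ i, a i ≤ b i) → (∀ i : Fin n, (D:ℤ) ≤ a i.succ - b i.castSucc) →
      ∃ x' : X, ∀ i : Fin (n+1), ∀ j : ℤ, a i ≤ j → j ≤ b i →
        dist (zit T j x') (zit T j (x i)) < η)
    {k : ℕ} (hk : 0 < k) (q r : ℕ) (hq : 0 < q) (y : Y) :
    Phi T S f (q*(k+D)+r) y
      ≤ (∑ i ∈ Finset.range q, Phi T S f k ((⇑S)^[i*(k+D)] y))
        + (q:ℝ)*(k:ℝ)*ε + ((q:ℝ)*(D:ℝ) + (r:ℝ))*C := by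
  refine le_of_forall_pos_le_add fun δ hδ => ?_
  have hqR : (0:ℝ) < q := by exact_mod_cast hq
  -- choose near minimizers on each block
  have hchoice : ∀ i : ℕ, ∃ x : X,
      (∑ j ∈ Finset.range k, f ((⇑T)^[j] x, (⇑S)^[j] ((⇑S)^[i*(k+D)] y)))
        < Phi T S f k ((⇑S)^[i*(k+D)] y) + δ/q := by
    intro i
    exact exists_lt_of_ciInf_lt (lt_add_of_pos_right _ (div_pos hδ hqR))
  choose ξ hξ using hchoice
  obtain ⟨n, rfl⟩ : ∃ n, q = n + 1 := ⟨q - 1, (Nat.succ_pred_eq_of_pos hq).symm⟩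
  set q := n + 1 with hqdef
  -- specification data
  set A : Fin (n+1) → ℤ := fun i => ((i : ℕ) * (k+D) : ℕ) with hA
  set B : Fin (n+1) → ℤ := fun i => ((i : ℕ) * (k+D) : ℕ) + (k:ℤ) - 1 with hB
  have hab : ∀ i, A i ≤ B i := by
    intro i
    have : (1:ℤ) ≤ (k:ℤ) := by exact_mod_cast hk
    simp only [hA, hB]; linarith
  have hgap : ∀ i : Fin n, (D:ℤ) ≤ A i.succ - B i.castSucc := by
    intro i
    simp only [hA, hB, Fin.val_succ, Fin.coe_castSucc]
    push_cast
    have h1 : ((i:ℤ)+1)*((k:ℤ)+(D:ℤ)) = (i:ℤ)*((k:ℤ)+(D:ℤ)) + ((k:ℤ)+(D:ℤ)) := by ring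
    linarith
  obtain ⟨x', hx'⟩ := hspec n (fun i => zit T (-(A i)) (ξ i)) A B hab hgap
  -- tracing in iterate form
  have htrace : ∀ (i : Fin (n+1)) (l : ℕ), l < k →
      dist ((⇑T)^[(i:ℕ)*(k+D)+l] x') ((⇑T)^[l] (ξ i)) < η := by
    intro i l hl
    have h1 : A i ≤ (((i:ℕ)*(k+D)+l : ℕ) : ℤ) := by
      simp only [hA]; push_cast; omega
    have h2 : (((i:ℕ)*(k+D)+l : ℕ) : ℤ) ≤ B i := by
      simp only [hB]; push_cast; omega
    have := hx' i (((i:ℕ)*(k+D)+l : ℕ) : ℤ) h1 h2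
    rw [zit_natCast] at this
    rw [zit_zadd, show (((i:ℕ)*(k+D)+l : ℕ) : ℤ) + -(A i) = ((l:ℕ) : ℤ) by
      simp only [hA]; push_cast; ring, zit_natCast] at this
    exact this
  -- per-term bound on blocks
  have hterm : ∀ (i : Fin (n+1)) (l : ℕ), l < k →
      f ((⇑T)^[(i:ℕ)*(k+D)+l] x', (⇑S)^[(i:ℕ)*(k+D)+l] y)
        ≤ f ((⇑T)^[l] (ξ i), (⇑S)^[l] ((⇑S)^[(i:ℕ)*(k+D)] y)) + ε := by
    intro i l hl
    have hS : (⇑S)^[(i:ℕ)*(k+D)+l] y = (⇑S)^[l] ((⇑S)^[(i:ℕ)*(k+D)] y) := by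
      rw [add_comm, Function.iterate_add_apply]
    rw [hS]
    have hd : dist (((⇑T)^[(i:ℕ)*(k+D)+l] x', (⇑S)^[l] ((⇑S)^[(i:ℕ)*(k+D)] y)) : X × Y)
        (((⇑T)^[l] (ξ i), (⇑S)^[l] ((⇑S)^[(i:ℕ)*(k+D)] y)) : X × Y) < η := by
      rw [Prod.dist_eq]
      simp only [dist_self]
      rw [max_eq_left dist_nonneg]
      exact htrace i l hl
    have := hUC _ _ hd
    have := abs_sub_le_iff.1 this
    linarith [this.1]
  -- the global sum bound
  set N := q*(k+D)+r with hN
  have hPhiN : Phi T S f N y ≤ ∑ j ∈ Finset.range N, f ((⇑T)^[j] x', (⇑S)^[j] y) :=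
    Phi_le_sum T S f hC N y x'
  set g : ℕ → ℝ := fun j => f ((⇑T)^[j] x', (⇑S)^[j] y) with hg
  have hsplit : ∑ j ∈ Finset.range N, g j
      = (∑ i ∈ Finset.range q, ∑ l ∈ Finset.range (k+D), g (i*(k+D) + l))
        + ∑ l ∈ Finset.range r, g (q*(k+D) + l) := by
    rw [hN, Finset.sum_range_add, sum_range_mul_eq]
  have hrest : ∑ l ∈ Finset.range r, g (q*(k+D) + l) ≤ (r:ℝ) * C := by
    calc ∑ l ∈ Finset.range r, g (q*(k+D) + l) ≤ ∑ l ∈ Finset.range r, C :=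
          Finset.sum_le_sum fun l _ => le_of_abs_le (hC _)
      _ = (r:ℝ) * C := by simp [mul_comm]
  have hblock : ∀ i ∈ Finset.range q, ∑ l ∈ Finset.range (k+D), g (i*(k+D) + l)
      ≤ Phi T S f k ((⇑S)^[i*(k+D)] y) + δ/q + (k:ℝ)*ε + (D:ℝ)*C := by
    intro i hi
    rw [Finset.mem_range] at hi
    have hi' : i = ((⟨i, hi⟩ : Fin (n+1)) : ℕ) := rfl
    rw [Finset.sum_range_add]
    have h1 : ∑ l ∈ Finset.range k, g (i*(k+D) + l)
        ≤ (∑ l ∈ Finset.range k, f ((⇑T)^[l] (ξ i), (⇑S)^[l] ((⇑S)^[i*(k+D)] y)))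
          + (k:ℝ)*ε := by
      calc ∑ l ∈ Finset.range k, g (i*(k+D) + l)
          ≤ ∑ l ∈ Finset.range k,
              (f ((⇑T)^[l] (ξ i), (⇑S)^[l] ((⇑S)^[i*(k+D)] y)) + ε) := by
            refine Finset.sum_le_sum fun l hl => ?_
            rw [Finset.mem_range] at hl
            have := hterm ⟨i, hi⟩ l hl
            simpa [hg] using this
        _ = (∑ l ∈ Finset.range k, f ((⇑T)^[l] (ξ i), (⇑S)^[l] ((⇑S)^[i*(k+D)] y)))
              + (k:ℝ)*ε := by rw [Finset.sum_add_distrib]; simp [mul_comm]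
    have h2 : ∑ l ∈ Finset.range D, g (i*(k+D) + (k + l)) ≤ (D:ℝ)*C := by
      calc ∑ l ∈ Finset.range D, g (i*(k+D) + (k+l)) ≤ ∑ l ∈ Finset.range D, C :=
            Finset.sum_le_sum fun l _ => le_of_abs_le (hC _)
        _ = (D:ℝ) * C := by simp [mul_comm]
    have h3 := hξ i
    set Pi := Phi T S f k ((⇑S)^[i*(k+D)] y)
    have hxi : (∑ l ∈ Finset.range k, f ((⇑T)^[l] (ξ i), (⇑S)^[l] ((⇑S)^[i*(k+D)] y)))
        ≤ Pi + δ/q := le_of_lt h3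
    linarith
  have hsum2 : ∑ i ∈ Finset.range q, ∑ l ∈ Finset.range (k+D), g (i*(k+D) + l)
      ≤ (∑ i ∈ Finset.range q, Phi T S f k ((⇑S)^[i*(k+D)] y))
        + (q:ℝ)*(δ/q) + (q:ℝ)*((k:ℝ)*ε) + (q:ℝ)*((D:ℝ)*C) := by
    calc ∑ i ∈ Finset.range q, ∑ l ∈ Finset.range (k+D), g (i*(k+D) + l)
        ≤ ∑ i ∈ Finset.range q,
            (Phi T S f k ((⇑S)^[i*(k+D)] y) + δ/q + (k:ℝ)*ε + (D:ℝ)*C) :=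
          Finset.sum_le_sum hblock
      _ = _ := by
          simp only [Finset.sum_add_distrib, Finset.sum_const, Finset.card_range,
            nsmul_eq_mul]
          try ring
  have hq_ne : (q:ℝ) ≠ 0 := ne_of_gt hqR
  have hfin : (q:ℝ)*(δ/q) = δ := by field_simp
  calc Phi T S f N y ≤ ∑ j ∈ Finset.range N, g j := hPhiN
    _ ≤ (∑ i ∈ Finset.range q, Phi T S f k ((⇑S)^[i*(k+D)] y))
        + (q:ℝ)*(δ/q) + (q:ℝ)*((k:ℝ)*ε) + (q:ℝ)*((D:ℝ)*C) + (r:ℝ)*C := by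
        rw [hsplit]; linarith
    _ ≤ (∑ i ∈ Finset.range q, Phi T S f k ((⇑S)^[i*(k+D)] y))
        + (q:ℝ)*(k:ℝ)*ε + ((q:ℝ)*(D:ℝ) + (r:ℝ))*C + δ := by
        rw [hfin]; linarith

end aux

section aux2
variable {X Y : Type*} [MetricSpace X] [Nonempty X]
  [MetricSpace Y] [Nonempty Y]

noncomputable def bb (T : X ≃ₜ X) (S : Y ≃ₜ Y) (f : X × Y → ℝ) (k : ℕ) : ℝ :=
  ⨆ y : Y, Phi T S f k y

variable (T : X ≃ₜ X) (S : Y ≃ₜ Y) (f : X × Y → ℝ) {C : ℝ} (hC : ∀ p, |f p| ≤ C)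
include hC

lemma bddAbove_Phi (k : ℕ) : BddAbove (Set.range (Phi T S f k)) := by
  refine ⟨(k:ℝ)*C, ?_⟩
  rintro r ⟨y, rfl⟩
  exact le_of_abs_le (abs_Phi_le T S f hC k y)

lemma Phi_le_bb (k : ℕ) (y : Y) : Phi T S f k y ≤ bb T S f k :=
  le_ciSup (bddAbove_Phi T S f hC k) y

lemma abs_bb_le (k : ℕ) : |bb T S f k| ≤ (k:ℝ)*C := by
  rw [abs_le]
  refine ⟨le_trans (neg_le_of_abs_le (abs_Phi_le T S f hC k (Classical.arbitrary Y)))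
      (Phi_le_bb T S f hC k _), ciSup_le fun y => le_of_abs_le (abs_Phi_le T S f hC k y)⟩

lemma key_bb {ε η : ℝ} (hε : 0 ≤ ε)
    (hUC : ∀ p q : X × Y, dist p q < η → |f p - f q| ≤ ε)
    {D : ℕ}
    (hspec : ∀ (n : ℕ) (x : Fin (n+1) → X) (a b : Fin (n+1) → ℤ),
      (∀ i, a i ≤ b i) → (∀ i : Fin n, (D:ℤ) ≤ a i.succ - b i.castSucc) →
      ∃ x' : X, ∀ i : Fin (n+1), ∀ j : ℤ, a i ≤ j → j ≤ b i →
        dist (zit T j x') (zit T j (x i)) < η)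
    {k : ℕ} (hk : 0 < k) (q r : ℕ) (hq : 0 < q) :
    bb T S f (q*(k+D)+r)
      ≤ (q:ℝ) * bb T S f k + (q:ℝ)*(k:ℝ)*ε + ((q:ℝ)*(D:ℝ) + (r:ℝ))*C := by
  refine ciSup_le fun y => ?_
  calc Phi T S f (q*(k+D)+r) y
      ≤ (∑ i ∈ Finset.range q, Phi T S f k ((⇑S)^[i*(k+D)] y))
        + (q:ℝ)*(k:ℝ)*ε + ((q:ℝ)*(D:ℝ) + (r:ℝ))*C :=
        key T S f hC hε hUC hspec hk q r hq y
    _ ≤ (∑ i ∈ Finset.range q, bb T S f k)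
        + (q:ℝ)*(k:ℝ)*ε + ((q:ℝ)*(D:ℝ) + (r:ℝ))*C := by
        gcongr with i hi
        exact Phi_le_bb T S f hC k _
    _ = (q:ℝ) * bb T S f k + (q:ℝ)*(k:ℝ)*ε + ((q:ℝ)*(D:ℝ) + (r:ℝ))*C := by
        simp [Finset.sum_const, mul_comm]

end aux2

/-- if `(X, T)` has the specification property, then the limit
`lim_{k→∞} max_{y ∈ Y} min_{x ∈ X} (1/k) Σ_{j<k} f(T^j x, S^j y)` exists. -/
theorem stmt10
    {X Y : Type*}
    [MetricSpace X] [CompactSpace X] [Nonempty X]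
    [MetricSpace Y] [CompactSpace Y] [Nonempty Y]
    (T : X ≃ₜ X) (S : Y ≃ₜ Y) (f : X × Y → ℝ) (hf : Continuous f)
    (hspecX : SpecProp T) :
    ∃ L : ℝ, Tendsto (fun k : ℕ => ⨆ y : Y, ⨅ x : X, birk2 (⇑T) (⇑S) f k x y)
      atTop (𝓝 L) := by
  classical
  obtain ⟨p₀, -, hp₀⟩ := isCompact_univ.exists_isMaxOn Set.univ_nonempty
    (hf.abs.continuousOn : ContinuousOn (fun p => |f p|) Set.univ)
  set C : ℝ := |f p₀| + 1 with hCdef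
  have hC : ∀ p, |f p| ≤ C := fun p => by
    have := hp₀ (Set.mem_univ p); dsimp [IsMaxOn, IsMinOn] at this; rw [hCdef]; linarith
  have hC0 : (0:ℝ) < C := by rw [hCdef]; positivity
  set a : ℕ → ℝ := fun n => ⨆ y : Y, ⨅ x : X, birk2 (⇑T) (⇑S) f n x y with hadef
  have ha : ∀ n : ℕ, a n = (n:ℝ)⁻¹ * bb T S f n := by
    intro n
    have h1 : ∀ y : Y, (⨅ x : X, birk2 (⇑T) (⇑S) f n x y) = (n:ℝ)⁻¹ * Phi T S f n y := by
      intro y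
      rw [Phi, Real.mul_iInf_of_nonneg (by positivity)]
      exact iInf_congr fun x => by simp [birk2, Prod.map_iterate]
    simp only [hadef]
    rw [bb, Real.mul_iSup_of_nonneg (by positivity)]
    exact iSup_congr h1
  have habs : ∀ n : ℕ, |a n| ≤ C := by
    intro n
    rw [ha n, abs_mul, abs_inv, Nat.abs_cast]
    rcases Nat.eq_zero_or_pos n with h | h
    · simp only [h, Nat.cast_zero, inv_zero, zero_mul]; exact hC0.le
    · have hn : (0:ℝ) < n := by exact_mod_cast h
      calc (n:ℝ)⁻¹ * |bb T S f n| ≤ (n:ℝ)⁻¹ * ((n:ℝ)*C) := by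
            gcongr
            exact abs_bb_le T S f hC n
        _ = C := by field_simp
  have hbdd_le : IsBoundedUnder (· ≤ ·) atTop a :=
    isBoundedUnder_of ⟨C, fun n => (abs_le.1 (habs n)).2⟩
  have hbdd_ge : IsBoundedUnder (· ≥ ·) atTop a :=
    isBoundedUnder_of ⟨-C, fun n => (abs_le.1 (habs n)).1⟩
  refine ⟨liminf a atTop, tendsto_of_liminf_eq_limsup rfl ?_ hbdd_le hbdd_ge⟩
  refine le_antisymm ?_ (liminf_le_limsup hbdd_le hbdd_ge)
  set l := liminf a atTop with hldef
  refine le_of_forall_pos_le_add fun ε hε => ?_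
  set ε' := ε/4 with hε'def
  have hε' : 0 < ε' := by positivity
  obtain ⟨η, hη, hUC0⟩ := Metric.uniformContinuous_iff.mp
    (CompactSpace.uniformContinuous_of_continuous hf) ε' hε'
  have hUC : ∀ p q : X × Y, dist p q < η → |f p - f q| ≤ ε' := fun p q h => by
    have := hUC0 h; rw [Real.dist_eq] at this; exact this.le
  obtain ⟨D, hD, hspec⟩ := hspecX η hη
  have hfreq : ∃ᶠ k in atTop, a k < l + ε' :=
    frequently_lt_of_liminf_lt hbdd_le.isCoboundedUnder_ge (lt_add_of_pos_right l hε')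
  have hevk : ∀ᶠ k : ℕ in atTop, 0 < k ∧ 2*C*(D:ℝ)/(k:ℝ) ≤ ε' := by
    filter_upwards [eventually_gt_atTop 0,
      (tendsto_const_div_atTop_nhds_zero_nat (2*C*(D:ℝ))).eventually
        (gt_mem_nhds hε')] with k h1 h2
    exact ⟨h1, h2.le⟩
  obtain ⟨k, hak, hk0, hkdiv⟩ := (hfreq.and_eventually hevk).exists
  have hevn : ∀ᶠ n : ℕ in atTop, a n ≤ l + ε := by
    filter_upwards [eventually_ge_atTop (k+D),
      (tendsto_const_div_atTop_nhds_zero_nat (2*C*((k:ℝ)+(D:ℝ)))).eventually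
        (gt_mem_nhds hε'),
      eventually_gt_atTop 0] with n hn h2 hn0
    set q := n / (k+D) with hqdef
    set r := n % (k+D) with hrdef
    have hkD : 0 < k + D := by omega
    have hq : 0 < q := Nat.div_pos hn hkD
    have hqr : q*(k+D) + r = n := by rw [hqdef, hrdef, mul_comm]; exact Nat.div_add_mod n (k+D)
    have hr : r < k + D := Nat.mod_lt n hkD
    have hbbn := key_bb T S f hC hε'.le hUC hspec hk0 q r hq
    rw [hqr] at hbbn
    have hKpos : (0:ℝ) < k := by exact_mod_cast hk0
    have hNpos : (0:ℝ) < n := by exact_mod_cast hn0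
    have hNeq : (n:ℝ) = (q:ℝ)*((k:ℝ)+(D:ℝ)) + (r:ℝ) := by exact_mod_cast hqr.symm
    have hbk : bb T S f k = (k:ℝ) * a k := by rw [ha k]; field_simp
    have h1 : 2*C*(D:ℝ) ≤ ε' * (k:ℝ) := by
      rw [div_le_iff₀ hKpos] at hkdiv; linarith
    have h2' : 2*C*((k:ℝ)+(D:ℝ)) ≤ ε' * (n:ℝ) := by
      rw [div_lt_iff₀ hNpos] at h2; linarith
    have hrR : (r:ℝ) ≤ (k:ℝ)+(D:ℝ) := by exact_mod_cast hr.le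
    have hE0 : (0:ℝ) ≤ (q:ℝ)*(D:ℝ)+(r:ℝ) := by positivity
    have f1 : (0:ℝ) ≤ ((q:ℝ)*(D:ℝ)+(r:ℝ)) * (C + a k) :=
      mul_nonneg hE0 (by linarith [(abs_le.1 (habs k)).1])
    have f2 : ε' * ((q:ℝ)*(k:ℝ)) ≤ ε' * (n:ℝ) := by
      have : (q:ℝ)*(k:ℝ) ≤ (n:ℝ) := by nlinarith
      nlinarith
    have f3 : (q:ℝ)*(2*C*(D:ℝ)) ≤ (q:ℝ)*(ε'*(k:ℝ)) := by
      have hq0 : (0:ℝ) ≤ q := by positivity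
      nlinarith
    have f4 : 2*C*(r:ℝ) ≤ 2*C*((k:ℝ)+(D:ℝ)) := by nlinarith
    have hkey : bb T S f n ≤ (n:ℝ) * (a k + 3*ε') := by
      rw [hbk] at hbbn
      rw [hNeq] at f2 h2' ⊢
      linarith [hbbn, f1, f2, f3, f4, h2']
    have h5 : a n ≤ a k + 3*ε' := by
      rw [ha n, inv_mul_le_iff₀ hNpos]
      exact hkey
    have h6 : a k + 3*ε' ≤ l + ε := by rw [hε'def] at hak ⊢; linarith
    linarith
  exact limsup_le_of_le hbdd_ge.isCoboundedUnder_le hevn
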